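/- arXiv:2407.08456 — 3 statements merged into one kernel-verified Lean document; each statement's English description precedes it below -/
import Mathlib

section
/- Let v ≠ 0 and let γ be continuous, 1-periodic, and non-constant. Let Q be the unique C¹ 1-periodic solution of Q' = v(γ₀ − γ) with ∫₀¹ Q = 0, where γ₀ = ∫₀¹ γ. Let R be C¹, 1-periodic, with ∫₀¹ R = 0 and R' = −2Q. Then the non-reciprocity coefficient N_γ := −∫₀¹ γ(y) R(y) dy equals (2/v)∫₀¹ Q(y)² dy, and in particular N_γ ≠ 0. -/
open intervalIntegral Set

theorem nonreciprocity_coefficient_gamma (v : ℝ) (hv : v ≠ 0) (γ Q R : ℝ → ℝ)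
    (hγc : Continuous γ) (hγper : ∀ y : ℝ, γ (y + 1) = γ y)
    (hγnc : ∃ a b : ℝ, γ a ≠ γ b)
    (hQ : ContDiff ℝ 1 Q) (hQper : ∀ y : ℝ, Q (y + 1) = Q y)
    (hQmean : ∫ y in (0:ℝ)..1, Q y = 0)
    (hQcell : ∀ y : ℝ, deriv Q y = v * ((∫ z in (0:ℝ)..1, γ z) - γ y))
    (hR : ContDiff ℝ 1 R) (hRper : ∀ y : ℝ, R (y + 1) = R y)
    (hRmean : ∫ y in (0:ℝ)..1, R y = 0)
    (hRcell : ∀ y : ℝ, deriv R y = -2 * Q y) :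
    (-∫ y in (0:ℝ)..1, γ y * R y) = (2 / v) * ∫ y in (0:ℝ)..1, (Q y) ^ 2 ∧
    (-∫ y in (0:ℝ)..1, γ y * R y) ≠ 0 := by
  set γ₀ : ℝ := ∫ z in (0:ℝ)..1, γ z with hγ₀
  have hQc : Continuous Q := hQ.continuous
  have hRc : Continuous R := hR.continuous
  have hQ'c : Continuous (deriv Q) := hQ.continuous_deriv le_rfl
  have hR'c : Continuous (deriv R) := hR.continuous_deriv le_rfl
  -- express γ in terms of deriv Q
  have hγeq : ∀ y : ℝ, γ y = γ₀ - deriv Q y / v := by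
    intro y
    have := hQcell y
    field_simp
    linarith [this]
  -- integration by parts
  have hdQ : ∀ x ∈ uIcc (0:ℝ) 1, HasDerivAt Q (deriv Q x) x := fun x _ =>
    ((hQ.differentiable one_ne_zero) x).hasDerivAt
  have hdR : ∀ x ∈ uIcc (0:ℝ) 1, HasDerivAt R (deriv R x) x := fun x _ =>
    ((hR.differentiable one_ne_zero) x).hasDerivAt
  have hQ10 : Q 1 = Q 0 := by simpa using hQper 0
  have hR10 : R 1 = R 0 := by simpa using hRper 0
  have hparts : ∫ y in (0:ℝ)..1, R y * deriv Q y
      = R 1 * Q 1 - R 0 * Q 0 - ∫ y in (0:ℝ)..1, deriv R y * Q y :=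
    integral_mul_deriv_eq_deriv_mul hdR hdQ
      (hR'c.intervalIntegrable 0 1) (hQ'c.intervalIntegrable 0 1)
  have hRQ' : ∫ y in (0:ℝ)..1, deriv R y * Q y = -2 * ∫ y in (0:ℝ)..1, (Q y) ^ 2 := by
    rw [← intervalIntegral.integral_const_mul]
    congr 1; ext y; rw [hRcell y]; ring
  have key : ∫ y in (0:ℝ)..1, R y * deriv Q y = 2 * ∫ y in (0:ℝ)..1, (Q y) ^ 2 := by
    rw [hparts, hRQ', hQ10, hR10]; ring
  -- main identity
  have hmain : (-∫ y in (0:ℝ)..1, γ y * R y) = (2 / v) * ∫ y in (0:ℝ)..1, (Q y) ^ 2 := by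
    have h1 : ∀ y : ℝ, γ y * R y = γ₀ * R y - (1 / v) * (R y * deriv Q y) := by
      intro y; rw [hγeq y]; field_simp
    have h2 : ∫ y in (0:ℝ)..1, γ y * R y
        = γ₀ * (∫ y in (0:ℝ)..1, R y) - (1 / v) * ∫ y in (0:ℝ)..1, R y * deriv Q y := by
      rw [← intervalIntegral.integral_const_mul, ← intervalIntegral.integral_const_mul,
        ← intervalIntegral.integral_sub (f := fun y => γ₀ * R y)
          (g := fun y => 1 / v * (R y * deriv Q y)) ((continuous_const.mul hRc).intervalIntegrable 0 1)
          ((continuous_const.mul (hRc.mul hQ'c)).intervalIntegrable 0 1)]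
      congr 1; ext y; exact h1 y
    rw [h2, hRmean, key]
    field_simp
    ring
  refine ⟨hmain, ?_⟩
  rw [hmain]
  -- positivity of ∫ Q²
  have hQne : ∃ t : ℝ, Q t ≠ 0 := by
    by_contra h
    push_neg at h
    have hQ0 : Q = fun _ => (0:ℝ) := funext h
    have hd0 : ∀ y : ℝ, deriv Q y = 0 := by intro y; rw [hQ0]; simp
    have hγconst : ∀ y : ℝ, γ y = γ₀ := by
      intro y
      have := hQcell y
      rw [hd0 y] at this
      have : γ₀ - γ y = 0 := by
        rcases mul_eq_zero.mp this.symm with h' | h'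
        · exact absurd h' hv
        · exact h'
      linarith
    obtain ⟨a, b, hab⟩ := hγnc
    exact hab ((hγconst a).trans (hγconst b).symm)
  obtain ⟨t, ht⟩ := hQne
  have hQperiodic : Function.Periodic Q 1 := hQper
  have hfr : Q (Int.fract t) = Q t := by
    have h := hQperiodic.sub_int_mul_eq (x := t) ⌊t⌋
    rw [mul_one] at h
    rw [Int.fract]
    exact h
  have hc : Int.fract t ∈ Icc (0:ℝ) 1 :=
    ⟨Int.fract_nonneg t, (Int.fract_lt_one t).le⟩
  have hpos : 0 < ∫ y in (0:ℝ)..1, (Q y) ^ 2 := by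
    have := intervalIntegral.integral_lt_integral_of_continuousOn_of_le_of_exists_lt
      (f := fun _ => (0:ℝ)) (g := fun y => (Q y) ^ 2) (a := 0) (b := 1) one_pos
      continuousOn_const ((hQc.pow 2).continuousOn)
      (fun x _ => sq_nonneg _) ⟨Int.fract t, hc, by
        show (0:ℝ) < Q (Int.fract t) ^ 2
        rw [hfr]
        exact lt_of_le_of_ne (sq_nonneg _) (Ne.symm (pow_ne_zero 2 ht))⟩
    simpa using this
  have : (2 / v) * ∫ y in (0:ℝ)..1, (Q y) ^ 2 ≠ 0 :=
    mul_ne_zero (div_ne_zero two_ne_zero hv) hpos.ne'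
  exact this
end

section
/- With σ continuous, 1-periodic, strictly positive, σ₀ = (∫₀¹ 1/σ)⁻¹, and P the mean-zero 1-periodic function with σ(P'+1)=σ₀, one has ∫₀¹ P(y)/σ(y) dy = 0. -/
theorem integral_P_div_sigma_zero (σ P : ℝ → ℝ) (σ₀ : ℝ)
    (hσc : Continuous σ) (hσper : ∀ y : ℝ, σ (y + 1) = σ y)
    (hσpos : ∀ y : ℝ, 0 < σ y)
    (hσ₀ : σ₀ = (∫ y in (0:ℝ)..1, 1 / σ y)⁻¹)
    (hP : ContDiff ℝ 1 P) (hPper : ∀ y : ℝ, P (y + 1) = P y)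
    (hPmean : ∫ y in (0:ℝ)..1, P y = 0)
    (hcell : ∀ y : ℝ, σ y * (deriv P y + 1) = σ₀) :
    ∫ y in (0:ℝ)..1, P y / σ y = 0 := by
  have hPc : Continuous P := hP.continuous
  have hP' : Continuous (deriv P) := hP.continuous_deriv le_rfl
  have hσne : ∀ y, σ y ≠ 0 := fun y => (hσpos y).ne'
  have hinv : Continuous fun y => 1 / σ y := continuous_const.div hσc hσne
  have hpos : 0 < ∫ y in (0:ℝ)..1, 1 / σ y := by
    apply intervalIntegral.intervalIntegral_pos_of_pos (hinv.intervalIntegrable 0 1)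
      _ one_pos
    intro x
    exact one_div_pos.mpr (hσpos x)
  have hσ0 : 0 < σ₀ := hσ₀ ▸ inv_pos.mpr hpos
  have key : ∀ y, P y / σ y = σ₀⁻¹ * (P y * deriv P y + P y) := by
    intro y
    have h := hcell y
    field_simp [hσne y, hσ0.ne']
    linear_combination (-P y) * h
  have hPP' : (∫ y in (0:ℝ)..1, P y * deriv P y) = 0 := by
    have hd : ∀ y ∈ Set.uIcc (0:ℝ) 1,
        HasDerivAt (fun x => P x ^ 2 / 2) (P y * deriv P y) y := by
      intro y _
      have h := (hP.differentiable one_ne_zero y).hasDerivAt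
      have : HasDerivAt (fun x => P x ^ 2 / 2) _ y := (h.pow 2).div_const 2
      convert this using 1
      ring
    have := intervalIntegral.integral_eq_sub_of_hasDerivAt hd
      ((hPc.mul hP').intervalIntegrable 0 1)
    have hP10 : P 1 = P 0 := by simpa using hPper 0
    rw [this, hP10]
    ring
  calc ∫ y in (0:ℝ)..1, P y / σ y
      = ∫ y in (0:ℝ)..1, σ₀⁻¹ * (P y * deriv P y + P y) := by
        simp only [key]
    _ = σ₀⁻¹ * ∫ y in (0:ℝ)..1, (P y * deriv P y + P y) := by
        rw [intervalIntegral.integral_const_mul]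
    _ = σ₀⁻¹ * ((∫ y in (0:ℝ)..1, P y * deriv P y) + ∫ y in (0:ℝ)..1, P y) := by
        rw [intervalIntegral.integral_add (f := fun y => P y * deriv P y) ((hPc.mul hP').intervalIntegrable 0 1)
          (hPc.intervalIntegrable 0 1)]
    _ = 0 := by rw [hPP', hPmean]; ring
end

section
/- Let σ, γ be continuous, 1-periodic, strictly positive, with P the mean-zero corrector for σ (σ(P'+1)=σ₀ constant) and Q the mean-zero 1-periodic C¹ solution of the cell problem ∂_y[σQ' + vγ] = 0 with σQ'+vγ continuous. Then the integration-by-parts identity ∫₀¹ σ(y)Q'(y) dy = v∫₀¹ γ(y)P'(y) dy holds. In particular, if γ is constant (so Q ≡ 0) or σ is constant (so P ≡ 0), the convective coefficient W₀ := ∫₀¹ σQ' dy vanishes. -/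
theorem convective_coefficient_identity (v : ℝ) (σ γ P Q : ℝ → ℝ) (σ₀ : ℝ)
    (hσc : Continuous σ) (hσper : ∀ y : ℝ, σ (y + 1) = σ y) (hσpos : ∀ y : ℝ, 0 < σ y)
    (hγc : Continuous γ) (hγper : ∀ y : ℝ, γ (y + 1) = γ y) (hγpos : ∀ y : ℝ, 0 < γ y)
    (hP : ContDiff ℝ 1 P) (hPper : ∀ y : ℝ, P (y + 1) = P y)
    (hPmean : ∫ y in (0:ℝ)..1, P y = 0)
    (hPcell : ∀ y : ℝ, σ y * (deriv P y + 1) = σ₀)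
    (hQ : ContDiff ℝ 1 Q) (hQper : ∀ y : ℝ, Q (y + 1) = Q y)
    (hQmean : ∫ y in (0:ℝ)..1, Q y = 0)
    (hQcell : ∃ K : ℝ, ∀ y : ℝ, σ y * deriv Q y + v * γ y = K) :
    (∫ y in (0:ℝ)..1, σ y * deriv Q y) = v * ∫ y in (0:ℝ)..1, γ y * deriv P y ∧
    ((∀ y z : ℝ, γ y = γ z) → (∫ y in (0:ℝ)..1, σ y * deriv Q y) = 0) ∧
    ((∀ y z : ℝ, σ y = σ z) → (∫ y in (0:ℝ)..1, σ y * deriv Q y) = 0) := by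
  obtain ⟨K, hK⟩ := hQcell
  have hQ' : Continuous (deriv Q) := hQ.continuous_deriv le_rfl
  have hP' : Continuous (deriv P) := hP.continuous_deriv le_rfl
  have hQint : ∫ y in (0:ℝ)..1, deriv Q y = 0 := by
    rw [intervalIntegral.integral_deriv_eq_sub
      (fun x _ => (hQ.differentiable one_ne_zero).differentiableAt)
      (hQ'.intervalIntegrable 0 1)]
    have := hQper 0
    simp at this
    rw [this]; ring
  have hPint : ∫ y in (0:ℝ)..1, deriv P y = 0 := by
    rw [intervalIntegral.integral_deriv_eq_sub
      (fun x _ => (hP.differentiable one_ne_zero).differentiableAt)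
      (hP'.intervalIntegrable 0 1)]
    have := hPper 0
    simp at this
    rw [this]; ring
  have hpt : ∀ y : ℝ, σ y * deriv Q y
      = σ₀ * deriv Q y - K * deriv P y + v * (γ y * deriv P y) := by
    intro y
    linear_combination (deriv Q y) * (hPcell y) - (deriv P y) * (hK y)
  have hmain : (∫ y in (0:ℝ)..1, σ y * deriv Q y) = v * ∫ y in (0:ℝ)..1, γ y * deriv P y := by
    have h1 : (∫ y in (0:ℝ)..1, σ y * deriv Q y)
        = ∫ y in (0:ℝ)..1, (σ₀ * deriv Q y - K * deriv P y + v * (γ y * deriv P y)) :=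
      intervalIntegral.integral_congr (fun y _ => hpt y)
    rw [h1]
    have i1 : IntervalIntegrable (fun y => σ₀ * deriv Q y) MeasureTheory.volume 0 1 :=
      ((continuous_const.mul hQ')).intervalIntegrable 0 1
    have i2 : IntervalIntegrable (fun y => K * deriv P y) MeasureTheory.volume 0 1 :=
      ((continuous_const.mul hP')).intervalIntegrable 0 1
    have i3 : IntervalIntegrable (fun y => v * (γ y * deriv P y)) MeasureTheory.volume 0 1 :=
      ((continuous_const.mul (hγc.mul hP'))).intervalIntegrable 0 1
    rw [intervalIntegral.integral_add (i1.sub i2) i3, intervalIntegral.integral_sub i1 i2,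
      intervalIntegral.integral_const_mul, intervalIntegral.integral_const_mul,
      intervalIntegral.integral_const_mul, hQint, hPint]
    ring
  refine ⟨hmain, ?_, ?_⟩
  · intro hγconst
    set c : ℝ := K - v * γ 0 with hc
    have hcQ : ∀ y : ℝ, σ y * deriv Q y = c := by
      intro y
      have := hK y
      rw [hγconst y 0] at this
      linarith
    have hQd : ∀ y : ℝ, deriv Q y = c / σ y := by
      intro y
      have := hcQ y
      rw [eq_div_iff (hσpos y).ne']
      linarith
    have hc0 : c = 0 := by
      by_contra hne
      rcases lt_or_gt_of_ne hne with hlt | hgt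
      · have hpos : 0 < ∫ y in (0:ℝ)..1, (-(deriv Q y)) := by
          apply intervalIntegral.intervalIntegral_pos_of_pos
          · exact (hQ'.neg.intervalIntegrable 0 1)
          · intro x
            rw [hQd x]
            exact neg_pos.mpr (div_neg_of_neg_of_pos hlt (hσpos x))
          · norm_num
        rw [intervalIntegral.integral_neg, hQint] at hpos
        norm_num at hpos
      · have hpos : 0 < ∫ y in (0:ℝ)..1, deriv Q y := by
          apply intervalIntegral.intervalIntegral_pos_of_pos
          · exact (hQ'.intervalIntegrable 0 1)
          · intro x
            rw [hQd x]
            exact div_pos hgt (hσpos x)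
          · norm_num
        rw [hQint] at hpos
        exact lt_irrefl 0 hpos
    calc (∫ y in (0:ℝ)..1, σ y * deriv Q y) = ∫ y in (0:ℝ)..1, c :=
          intervalIntegral.integral_congr (fun y _ => hcQ y)
      _ = 0 := by simp [hc0]
  · intro hσconst
    have hPd : ∀ y : ℝ, deriv P y = deriv P 0 := by
      intro y
      have h1 := hPcell y
      have h2 := hPcell 0
      rw [hσconst y 0] at h1
      have := hσpos 0
      nlinarith
    have hP0 : deriv P 0 = 0 := by
      have : ∫ y in (0:ℝ)..1, deriv P y = ∫ y in (0:ℝ)..1, deriv P 0 :=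
        intervalIntegral.integral_congr (fun y _ => hPd y)
      rw [hPint] at this
      simpa using this.symm
    have hPz : ∀ y : ℝ, deriv P y = 0 := fun y => (hPd y).trans hP0
    rw [hmain]
    have : (∫ y in (0:ℝ)..1, γ y * deriv P y) = ∫ y in (0:ℝ)..1, (0:ℝ) :=
      intervalIntegral.integral_congr (fun y _ => by rw [hPz y, mul_zero])
    rw [this]
    simp
end
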